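/- arXiv:1908.01250 — 5 statements merged into one kernel-verified Lean document; each statement's English description precedes it below -/
import Mathlib

section
/- Let H be a quaternion algebra over a field F of characteristic ≠ 2 and ‡ an orthogonal involution on H. Then SL^‡(2,H) is a group under matrix multiplication: the identity matrix lies in SL^‡(2,H), SL^‡(2,H) is closed under matrix products, and every element (a b; c d) of SL^‡(2,H) has two-sided inverse (d^‡ −b^‡; −c^‡ a^‡), which again lies in SL^‡(2,H). -/
/-- `dag : H → H` is an orthogonal involution on the `F`-algebra `H`: an `F`-linear
anti-automorphism of order 2 whose fixed subspace is 3-dimensional. -/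
def IsOrthogonalInvolution (F : Type*) {H : Type*} [Field F] [Ring H] [Algebra F H]
    (dag : H → H) : Prop :=
  (∀ x y : H, dag (x + y) = dag x + dag y) ∧
  (∀ (c : F) (x : H), dag (c • x) = c • dag x) ∧
  (∀ x y : H, dag (x * y) = dag y * dag x) ∧
  (∀ x : H, dag (dag x) = x) ∧
  Module.finrank F (Submodule.span F {x : H | dag x = x}) = 3

/-- `SL^‡(2,H)`: 2×2 matrices `(a b; c d)` over `H` with `a·b^‡ ∈ H^+`, `c·d^‡ ∈ H^+`
and `a·d^‡ − b·c^‡ = 1`, where `H^+` is the fixed set of `‡`. -/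
def SLdag {H : Type*} [Ring H] (dag : H → H) : Set (Matrix (Fin 2) (Fin 2) H) :=
  {γ | dag (γ 0 0 * dag (γ 0 1)) = γ 0 0 * dag (γ 0 1) ∧
       dag (γ 1 0 * dag (γ 1 1)) = γ 1 0 * dag (γ 1 1) ∧
       γ 0 0 * dag (γ 1 1) - γ 0 1 * dag (γ 1 0) = 1}

section Aux

variable {H : Type*} [Ring H]

/-- Key hermitian identity for closure of `SL^‡(2,H)` under products. -/
lemma sldag_key (a b p q r s a' b' p' q' r' s' : H)
    (hB : b * a' = a * b') (hP : q * p' = p * q') (hR : s * r' = r * s')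
    (hδ : p * s' - q * r' = 1) (hδ' : s * p' - r * q' = 1) :
    (a * q + b * s) * (p' * a' + r' * b') = (a * p + b * r) * (q' * a' + s' * b') := by
  have e1 : b * (s * p') * a' - b * (r * q') * a' = b * a' := by
    have h := congrArg (fun x => b * x * a') hδ'
    simpa only [mul_sub, sub_mul, mul_one] using h
  have e2 : a * (p * s') * b' - a * (q * r') * b' = a * b' := by
    have h := congrArg (fun x => a * x * b') hδ
    simpa only [mul_sub, sub_mul, mul_one] using h
  have e1' : b * (s * p') * a' = b * a' + b * (r * q') * a' := by
    rw [← e1]; abel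
  have e2' : a * (p * s') * b' = a * b' + a * (q * r') * b' := by
    rw [← e2]; abel
  have hmid : b * (s * p') * a' + a * (q * r') * b'
      = a * (p * s') * b' + b * (r * q') * a' := by
    rw [e1', e2', hB]; abel
  calc (a * q + b * s) * (p' * a' + r' * b')
      = a * (q * p') * a' + (b * (s * p') * a' + a * (q * r') * b') + b * (s * r') * b' := by
        noncomm_ring
    _ = a * (p * q') * a' + (a * (p * s') * b' + b * (r * q') * a') + b * (r * s') * b' := by
        rw [hP, hR, hmid]
    _ = (a * p + b * r) * (q' * a' + s' * b') := by noncomm_ring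

/-- Key determinant identity for closure of `SL^‡(2,H)` under products. -/
lemma sldag_det (a b c' d' p q r s p' q' r' s' : H)
    (hP : q * p' = p * q') (hR : s * r' = r * s')
    (hδ : p * s' - q * r' = 1) (hδ' : s * p' - r * q' = 1)
    (hγ : a * d' - b * c' = 1) :
    (a * p + b * r) * (q' * c' + s' * d') - (a * q + b * s) * (p' * c' + r' * d') = 1 := by
  have e1 : a * (p * s') * d' - a * (q * r') * d' = a * d' := by
    have h := congrArg (fun x => a * x * d') hδ
    simpa only [mul_sub, sub_mul, mul_one] using h
  have e2 : b * (s * p') * c' - b * (r * q') * c' = b * c' := by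
    have h := congrArg (fun x => b * x * c') hδ'
    simpa only [mul_sub, sub_mul, mul_one] using h
  calc (a * p + b * r) * (q' * c' + s' * d') - (a * q + b * s) * (p' * c' + r' * d')
      = (a * (p * q') * c' - a * (q * p') * c') + (b * (r * s') * d' - b * (s * r') * d')
        + ((a * (p * s') * d' - a * (q * r') * d')
          - (b * (s * p') * c' - b * (r * q') * c')) := by
        noncomm_ring
    _ = 1 := by rw [hP, hR, e1, e2, sub_self, sub_self, hγ]; abel

end Aux

/-- for a quaternion algebra `H` over a field `F` of characteristic ≠ 2 with
orthogonal involution `‡`, the set `SL^‡(2,H)` is a group under matrix multiplication: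
it contains the identity, is closed under products, and each `(a b; c d)` in it has the
two-sided inverse `(d^‡ −b^‡; −c^‡ a^‡)`, which again lies in `SL^‡(2,H)`. -/
theorem stmt_0 (F H : Type*) [Field F] [Ring H] [Algebra F H]
    (hchar : (2 : F) ≠ 0)
    [Algebra.IsCentral F H] [IsSimpleRing H] (hdim : Module.finrank F H = 4)
    (dag : H → H) (hdag : IsOrthogonalInvolution F dag) :
    (1 : Matrix (Fin 2) (Fin 2) H) ∈ SLdag dag ∧
    (∀ γ δ, γ ∈ SLdag dag → δ ∈ SLdag dag → γ * δ ∈ SLdag dag) ∧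
    (∀ γ ∈ SLdag dag,
      !![dag (γ 1 1), -dag (γ 0 1); -dag (γ 1 0), dag (γ 0 0)] ∈ SLdag dag ∧
      γ * !![dag (γ 1 1), -dag (γ 0 1); -dag (γ 1 0), dag (γ 0 0)] = 1 ∧
      !![dag (γ 1 1), -dag (γ 0 1); -dag (γ 1 0), dag (γ 0 0)] * γ = 1) := by
  obtain ⟨hadd, -, hmul, hinv, -⟩ := hdag
  -- basic properties of `dag`
  have h0 : dag 0 = 0 := by
    have h := hadd 0 0
    rw [add_zero] at h
    exact (add_eq_left.mp h.symm)
  have h1 : dag 1 = 1 := by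
    have h := hmul 1 (dag 1)
    rw [one_mul, hinv, one_mul] at h
    exact h.symm
  have hneg : ∀ x : H, dag (-x) = -dag x := by
    intro x
    have h := hadd x (-x)
    rw [add_neg_cancel, h0] at h
    exact (neg_eq_of_add_eq_zero_right h.symm).symm
  have hsub : ∀ x y : H, dag (x - y) = dag x - dag y := by
    intro x y
    rw [sub_eq_add_neg, hadd, hneg, sub_eq_add_neg]
  -- entries of a product of 2x2 matrices
  have m : ∀ (A B : Matrix (Fin 2) (Fin 2) H) (i j : Fin 2),
      (A * B) i j = A i 0 * B 0 j + A i 1 * B 1 j := by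
    intro A B i j
    rw [Matrix.mul_apply, Fin.sum_univ_two]
  refine ⟨?_, ?_, ?_⟩
  · -- the identity matrix
    refine ⟨?_, ?_, ?_⟩ <;> simp [Matrix.one_apply, h0, h1]
  · -- closure under products
    intro γ δ hγ hδ
    obtain ⟨hγ1, hγ2, hγ3⟩ := hγ
    obtain ⟨hδ1, hδ2, hδ3⟩ := hδ
    rw [hmul, hinv] at hγ1 hγ2 hδ1 hδ2
    have hδ3' : δ 1 1 * dag (δ 0 0) - δ 1 0 * dag (δ 0 1) = 1 := by
      have h := congrArg dag hδ3
      simp only [hsub, hmul, hinv, h1] at h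
      exact h
    refine ⟨?_, ?_, ?_⟩
    · rw [m γ δ 0 0, m γ δ 0 1]
      simp only [hadd, hmul, hinv]
      exact sldag_key _ _ _ _ _ _ _ _ _ _ _ _ hγ1 hδ1 hδ2 hδ3 hδ3'
    · rw [m γ δ 1 0, m γ δ 1 1]
      simp only [hadd, hmul, hinv]
      exact sldag_key _ _ _ _ _ _ _ _ _ _ _ _ hγ2 hδ1 hδ2 hδ3 hδ3'
    · rw [m γ δ 0 0, m γ δ 1 1, m γ δ 0 1, m γ δ 1 0]
      simp only [hadd, hmul, hinv]
      exact sldag_det _ _ _ _ _ _ _ _ _ _ _ _ hδ1 hδ2 hδ3 hδ3' hγ3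
  · -- inverses
    intro γ hγ
    obtain ⟨hγ1, hγ2, hγ3⟩ := hγ
    rw [hmul, hinv] at hγ1 hγ2
    have hγ3' : γ 1 1 * dag (γ 0 0) - γ 1 0 * dag (γ 0 1) = 1 := by
      have h := congrArg dag hγ3
      simp only [hsub, hmul, hinv, h1] at h
      exact h
    set τ : Matrix (Fin 2) (Fin 2) H :=
      !![dag (γ 1 1), -dag (γ 0 1); -dag (γ 1 0), dag (γ 0 0)] with hτ
    have τ00 : τ 0 0 = dag (γ 1 1) := rfl
    have τ01 : τ 0 1 = -dag (γ 0 1) := rfl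
    have τ10 : τ 1 0 = -dag (γ 1 0) := rfl
    have τ11 : τ 1 1 = dag (γ 0 0) := rfl
    -- right inverse: γ * τ = 1
    have k00 : γ 0 0 * dag (γ 1 1) + γ 0 1 * -dag (γ 1 0) = 1 := by
      rw [mul_neg, ← sub_eq_add_neg, hγ3]
    have k01 : γ 0 0 * -dag (γ 0 1) + γ 0 1 * dag (γ 0 0) = 0 := by
      rw [mul_neg, hγ1, neg_add_cancel]
    have k10 : γ 1 0 * dag (γ 1 1) + γ 1 1 * -dag (γ 1 0) = 0 := by
      rw [mul_neg, ← sub_eq_add_neg, hγ2, sub_self]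
    have k11 : γ 1 0 * -dag (γ 0 1) + γ 1 1 * dag (γ 0 0) = 1 := by
      rw [mul_neg, add_comm, ← sub_eq_add_neg, hγ3']
    have hright : γ * τ = 1 := by
      rw [Matrix.eta_fin_two (γ * τ), m, m, m, m, τ00, τ01, τ10, τ11,
        k00, k01, k10, k11, Matrix.one_fin_two]
    -- Dedekind finiteness: a right inverse is a two-sided inverse
    have hfdH : FiniteDimensional F H :=
      FiniteDimensional.of_finrank_pos (by rw [hdim]; norm_num)
    have hfd : FiniteDimensional F (Matrix (Fin 2) (Fin 2) H) := by infer_instance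
    have hsurj : Function.Surjective (LinearMap.mulLeft F γ) := by
      intro y
      exact ⟨τ * y, by rw [LinearMap.mulLeft_apply, ← mul_assoc, hright, one_mul]⟩
    have hinj : Function.Injective (LinearMap.mulLeft F γ) :=
      LinearMap.injective_iff_surjective.mpr hsurj
    have hleft : τ * γ = 1 := by
      apply hinj
      rw [LinearMap.mulLeft_apply, LinearMap.mulLeft_apply, ← mul_assoc, hright,
        one_mul, mul_one]
    -- extract the entries of τ * γ = 1
    have l00 : dag (γ 1 1) * γ 0 0 + -dag (γ 0 1) * γ 1 0 = 1 := by
      have h := congrFun (congrFun hleft 0) 0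
      rw [m, Matrix.one_apply, if_pos rfl] at h
      rwa [τ00, τ01] at h
    have l01 : dag (γ 1 1) * γ 0 1 + -dag (γ 0 1) * γ 1 1 = 0 := by
      have h := congrFun (congrFun hleft 0) 1
      rw [m, Matrix.one_apply, if_neg (by decide)] at h
      rwa [τ00, τ01] at h
    have l10 : -dag (γ 1 0) * γ 0 0 + dag (γ 0 0) * γ 1 0 = 0 := by
      have h := congrFun (congrFun hleft 1) 0
      rw [m, Matrix.one_apply, if_neg (by decide)] at h
      rwa [τ10, τ11] at h
    have l11 : -dag (γ 1 0) * γ 0 1 + dag (γ 0 0) * γ 1 1 = 1 := by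
      have h := congrFun (congrFun hleft 1) 1
      rw [m, Matrix.one_apply, if_pos rfl] at h
      rwa [τ10, τ11] at h
    refine ⟨⟨?_, ?_, ?_⟩, hright, hleft⟩
    · -- dag (τ 0 0 * dag (τ 0 1)) = τ 0 0 * dag (τ 0 1)
      rw [τ00, τ01, hneg, hinv, mul_neg, hneg, hmul, hinv, neg_inj]
      -- goal: dag (γ 0 1) * γ 1 1 = dag (γ 1 1) * γ 0 1
      have := l01
      rw [neg_mul, ← sub_eq_add_neg, sub_eq_zero] at this
      exact this.symm
    · rw [τ10, τ11, hinv, neg_mul, hneg, hmul, hinv, neg_inj]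
      -- goal: dag (γ 0 0) * γ 1 0 = dag (γ 1 0) * γ 0 0
      have := l10
      rw [neg_mul, neg_add_eq_sub, sub_eq_zero] at this
      exact this
    · rw [τ00, τ01, τ10, τ11, hinv, hneg, hinv, mul_neg, neg_mul, neg_neg]
      -- goal: dag (γ 1 1) * γ 0 0 - dag (γ 0 1) * γ 1 0 = 1
      rw [neg_mul, ← sub_eq_add_neg] at l00
      exact l00
end

section
/- Let F be a field of characteristic ≠ 2, a, b ∈ F nonzero, H = (a,b/F) the quaternion algebra with basis 1, i, j, ij, and ‡ the orthogonal involution (w + xi + yj + zij)^‡ = w + xi + yj − zij, so H^+ = F ⊕ Fi ⊕ Fj. Set J = (0 ij; −ij 0) ∈ Mat(2,H). Then SL^‡(2,H) = { γ ∈ GL(2,H) : γ · J · γ̄^T = J }, where γ̄^T denotes the transpose of γ with the standard involution x ↦ x̄ applied to each entry. -/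
open Quaternion Matrix

section aux
variable {F : Type*} [Field F] {a b : F}

/-- The orthogonal involution `‡`. -/
private def dg (q : ℍ[F,a,b]) : ℍ[F,a,b] := ⟨q.re, q.imI, q.imJ, -q.imK⟩

/-- The quaternion `k = ij`. -/
private def kk : ℍ[F,a,b] := ⟨0,0,0,1⟩

private lemma k_mul_star (x : ℍ[F,a,b]) : kk * star x = dg x * kk := by
  ext <;> simp [kk, dg] <;> ring

private lemma mul_k_star (x y : ℍ[F,a,b]) : x * kk * star y = x * dg y * kk := by
  rw [mul_assoc, k_mul_star, ← mul_assoc]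

private lemma dg_swap (x y : ℍ[F,a,b]) : dg (x * dg y) = y * dg x := by
  ext <;> simp [dg] <;> ring

private lemma k_unit (ha : a ≠ 0) (hb : b ≠ 0) : IsUnit (kk : ℍ[F,a,b]) := by
  refine ⟨⟨kk, (-(a*b))⁻¹ • kk, ?_, ?_⟩, rfl⟩ <;>
  · ext <;> simp [kk] <;> field_simp

private lemma k_cancel (ha : a ≠ 0) (hb : b ≠ 0) {x y : ℍ[F,a,b]}
    (h : x * kk = y * kk) : x = y := (k_unit ha hb).mul_right_cancel h

private def Jm : Matrix (Fin 2) (Fin 2) ℍ[F,a,b] := !![0, kk; -kk, 0]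

private lemma prod_formula (γ : Matrix (Fin 2) (Fin 2) ℍ[F,a,b]) :
    γ * Jm * γᴴ =
      !![(γ 0 0 * dg (γ 0 1) - γ 0 1 * dg (γ 0 0)) * kk,
         (γ 0 0 * dg (γ 1 1) - γ 0 1 * dg (γ 1 0)) * kk;
         (γ 1 0 * dg (γ 0 1) - γ 1 1 * dg (γ 0 0)) * kk,
         (γ 1 0 * dg (γ 1 1) - γ 1 1 * dg (γ 1 0)) * kk] := by
  refine Matrix.ext fun p q => ?_
  fin_cases p <;> fin_cases q <;>
    simp [Jm, Matrix.mul_apply, Fin.sum_univ_two, conjTranspose_apply,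
      mul_neg, neg_mul, sub_mul, mul_k_star] <;>
    abel

private lemma dg_sub (x y : ℍ[F,a,b]) : dg (x - y) = dg x - dg y := by
  ext <;> simp [dg] <;> ring

private lemma dg_one : dg (1 : ℍ[F,a,b]) = 1 := by ext <;> simp [dg]

private lemma main (ha : a ≠ 0) (hb : b ≠ 0) :
    SLdag (dg (F := F) (a := a) (b := b)) =
      {γ : Matrix (Fin 2) (Fin 2) ℍ[F,a,b] | IsUnit γ ∧ γ * Jm * γᴴ = Jm} := by
  ext γ
  simp only [SLdag, Set.mem_setOf_eq]
  constructor
  · rintro ⟨h1, h2, h3⟩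
    have hAB : γ 0 0 * dg (γ 0 1) = γ 0 1 * dg (γ 0 0) := h1.symm.trans (dg_swap _ _)
    have hCD : γ 1 0 * dg (γ 1 1) = γ 1 1 * dg (γ 1 0) := h2.symm.trans (dg_swap _ _)
    have h3' : γ 1 1 * dg (γ 0 0) - γ 1 0 * dg (γ 0 1) = 1 := by
      have := congrArg dg h3
      rwa [dg_sub, dg_swap, dg_swap, dg_one] at this
    have hmat : γ * Jm * γᴴ = Jm := by
      rw [prod_formula]
      have e1 : γ 0 0 * dg (γ 0 1) - γ 0 1 * dg (γ 0 0) = 0 := sub_eq_zero.mpr hAB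
      have e4 : γ 1 0 * dg (γ 1 1) - γ 1 1 * dg (γ 1 0) = 0 := sub_eq_zero.mpr hCD
      have e3 : γ 1 0 * dg (γ 0 1) - γ 1 1 * dg (γ 0 0) = -1 := by
        rw [← neg_sub, h3']
      rw [e1, e3, e4, h3]
      simp [Jm]
    refine ⟨?_, hmat⟩
    set N : Matrix (Fin 2) (Fin 2) ℍ[F,a,b] :=
      !![dg (γ 1 1), -dg (γ 0 1); -dg (γ 1 0), dg (γ 0 0)] with hN
    have f1 : γ 0 0 * dg (γ 1 1) + -(γ 0 1 * dg (γ 1 0)) = 1 := by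
      rw [← sub_eq_add_neg]; exact h3
    have f2 : -(γ 0 0 * dg (γ 0 1)) + γ 0 1 * dg (γ 0 0) = 0 := by
      rw [hAB]; exact neg_add_cancel _
    have f3 : γ 1 0 * dg (γ 1 1) + -(γ 1 1 * dg (γ 1 0)) = 0 := by
      rw [hCD, ← sub_eq_add_neg, sub_self]
    have f4 : -(γ 1 0 * dg (γ 0 1)) + γ 1 1 * dg (γ 0 0) = 1 := by
      rw [add_comm, ← sub_eq_add_neg]; exact h3'
    have hγN : γ * N = 1 := by
      refine Matrix.ext fun p q => ?_
      fin_cases p <;> fin_cases q <;>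
        simp [hN, Matrix.mul_apply, Fin.sum_univ_two, Matrix.one_apply, mul_neg,
          f1, f2, f3, f4]
    have hsurj : Function.Surjective (LinearMap.mulLeft F γ) := fun x =>
      ⟨N * x, by simp [← mul_assoc, hγN]⟩
    have hinj : Function.Injective (LinearMap.mulLeft F γ) :=
      LinearMap.injective_iff_surjective.mpr hsurj
    have hNγ : N * γ = 1 := by
      have h : γ * (N * γ) = γ * 1 := by rw [← mul_assoc, hγN, one_mul, mul_one]
      exact hinj h
    exact ⟨⟨γ, N, hγN, hNγ⟩, rfl⟩
  · rintro ⟨-, hmat⟩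
    rw [prod_formula] at hmat
    have h00 := congrFun (congrFun hmat 0) 0
    have h01 := congrFun (congrFun hmat 0) 1
    have h11 := congrFun (congrFun hmat 1) 1
    simp only [Jm, Matrix.cons_val', Matrix.cons_val_zero, Matrix.cons_val_one,
      Matrix.head_cons, Matrix.empty_val', Matrix.cons_val_fin_one, Matrix.head_fin_const,
      Matrix.of_apply] at h00 h01 h11
    have e1 : γ 0 0 * dg (γ 0 1) - γ 0 1 * dg (γ 0 0) = 0 :=
      k_cancel ha hb (by rw [h00, zero_mul])
    have e2 : γ 1 0 * dg (γ 1 1) - γ 1 1 * dg (γ 1 0) = 0 :=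
      k_cancel ha hb (by rw [h11, zero_mul])
    have e3 : γ 0 0 * dg (γ 1 1) - γ 0 1 * dg (γ 1 0) = 1 :=
      k_cancel ha hb (by rw [h01, one_mul])
    exact ⟨(dg_swap _ _).trans (sub_eq_zero.mp e1).symm,
           (dg_swap _ _).trans (sub_eq_zero.mp e2).symm, e3⟩

end aux

/-- for the quaternion algebra `H = (a,b/F)` (char F ≠ 2, a,b ≠ 0) with the
orthogonal involution `(w + xi + yj + zij)^‡ = w + xi + yj − zij` and
`J = (0 ij; −ij 0)`, one has `SL^‡(2,H) = {γ ∈ GL(2,H) : γ·J·γ̄ᵀ = J}`, where `γ̄ᵀ` is the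
conjugate-transpose with respect to the standard involution. -/
theorem stmt_1 (F : Type*) [Field F] (hchar : (2 : F) ≠ 0) (a b : F) (ha : a ≠ 0) (hb : b ≠ 0) :
    SLdag (fun q : ℍ[F, a, b] => ⟨q.re, q.imI, q.imJ, -q.imK⟩) =
      {γ : Matrix (Fin 2) (Fin 2) ℍ[F, a, b] | IsUnit γ ∧
        γ * !![(0 : ℍ[F, a, b]), ⟨0, 0, 0, 1⟩; -⟨0, 0, 0, 1⟩, 0] * γᴴ =
          !![(0 : ℍ[F, a, b]), ⟨0, 0, 0, 1⟩; -⟨0, 0, 0, 1⟩, 0]} := by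
  exact main ha hb
end

section
/- Let H be a quaternion algebra over a field F of characteristic ≠ 2 with orthogonal involution ‡ and fixed subspace H^+. Then every unit u ∈ H^× can be written in the form u = 1 + x·y for some x, y ∈ H^+. -/
private theorem quat_prod {F H : Type*} [Field F] [Ring H] [Algebra F H]
    (hchar : (2:F) ≠ 0) (dag : H → H)
    (hadd : ∀ x y : H, dag (x + y) = dag x + dag y)
    (hsmul : ∀ (c : F) (x : H), dag (c • x) = c • dag x)
    (s v : H) (α β : F) (hα : α ≠ 0) (hβ : β ≠ 0)
    (hss : s * s = α • 1) (hvv : v * v = β • 1) (hvs : v * s = -(s * v))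
    (hdag1 : dag 1 = 1) (hdags : dag s = -s) (hdagv : dag v = v)
    (hdagw : dag (s * v) = s * v)
    (t : H) (t0 t1 t2 t3 : F)
    (ht : t = t0 • 1 + t1 • s + t2 • v + t3 • (s * v)) :
    ∃ x y : H, dag x = x ∧ dag y = y ∧ x * y = t := by
  have hwv : (s * v) * v = β • s := by rw [mul_assoc, hvv, mul_smul_comm, mul_one]
  have hvw : v * (s * v) = -(β • s) := by rw [← mul_assoc, hvs, neg_mul, hwv]
  have hsw : s * (s * v) = α • v := by rw [← mul_assoc, hss, smul_mul_assoc, one_mul]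
  have hws : (s * v) * s = -(α • v) := by rw [mul_assoc, hvs, mul_neg, hsw]
  have hww : (s * v) * (s * v) = -((β * α) • (1:H)) := by
    rw [mul_assoc s v (s*v), hvw, mul_neg, mul_smul_comm, hss, smul_smul]
  have inner : ∀ a b c : F, a*t1 + β*(b*t3 - c*t2) = 0 →
      a^2 - β*b^2 + α*β*c^2 ≠ 0 →
      ∃ x y : H, dag x = x ∧ dag y = y ∧ x * y = t := by
    intro a b c hlin hN
    set N := a^2 - β*b^2 + α*β*c^2 with hNdef
    set x := a • (1:H) + b • v + c • (s*v) with hx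
    set σ := a • (1:H) - b • v - c • (s*v) with hσ
    have hxσ : x * σ = N • 1 := by
      rw [hx, hσ, hNdef]
      simp only [mul_sub, sub_mul, mul_add, add_mul, smul_mul_assoc, mul_smul_comm,
        one_mul, mul_one, hvv, hvs, hwv, hvw, hsw, hws, hww, hss]
      match_scalars <;> ring
    have hσt : σ * t = (a*t0 - β*b*t2 + α*β*c*t3) • 1 + (a*t2 - b*t0 + α*c*t1) • v
        + (a*t3 + b*t1 - c*t0) • (s*v) := by
      rw [hσ, ht]
      simp only [mul_sub, sub_mul, mul_add, add_mul, smul_mul_assoc, mul_smul_comm,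
        one_mul, mul_one, hvv, hvs, hwv, hvw, hsw, hws, hww, hss]
      match_scalars
      any_goals ring1
      all_goals linear_combination hlin
    refine ⟨x, N⁻¹ • (σ * t), ?_, ?_, ?_⟩
    · rw [hx]; simp only [hadd, hsmul, hdag1, hdagv, hdagw]
    · rw [hσt]
      simp only [hsmul, hadd, hdag1, hdagv, hdagw]
    · rw [mul_smul_comm, ← mul_assoc, hxσ, smul_mul_assoc, one_mul, smul_smul,
        inv_mul_cancel₀ hN, one_smul]
  by_cases ht1 : t1 = 0
  · refine ⟨1, t, hdag1, ?_, by rw [one_mul]⟩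
    rw [ht, ht1]
    simp only [zero_smul, add_zero, hadd, hsmul, hdag1, hdagv, hdagw]
  · have solve : ∀ b c : F, β*(b*t3 - c*t2)^2 - t1^2*b^2 + α*t1^2*c^2 ≠ 0 →
        ∃ x y : H, dag x = x ∧ dag y = y ∧ x*y = t := by
      intro b c hM
      refine inner (-(β*(b*t3 - c*t2))/t1) b c (by field_simp; ring) ?_
      intro h
      apply hM
      field_simp at h
      have h2 : β * (β*(b*t3 - c*t2)^2 - t1^2*b^2 + α*t1^2*c^2) = 0 := by
        linear_combination h
      exact (mul_eq_zero.1 h2).resolve_left hβ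
    by_cases h1 : β*((1:F)*t3 - 0*t2)^2 - t1^2*1^2 + α*t1^2*0^2 ≠ 0
    · exact solve 1 0 h1
    by_cases h2 : β*((0:F)*t3 - 1*t2)^2 - t1^2*0^2 + α*t1^2*1^2 ≠ 0
    · exact solve 0 1 h2
    by_cases h3 : β*((1:F)*t3 - 1*t2)^2 - t1^2*1^2 + α*t1^2*1^2 ≠ 0
    · exact solve 1 1 h3
    exfalso
    push_neg at h1 h2 h3
    have h23 : t2 * t3 = 0 := by
      have h2b : (2*β) * (t2*t3) = 0 := by linear_combination h1 + h2 - h3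
      rcases mul_eq_zero.1 h2b with h | h
      · exact absurd h (mul_ne_zero hchar hβ)
      · exact h
    rcases mul_eq_zero.1 h23 with h | h
    · have ha : α * t1^2 = 0 := by linear_combination h2 - β*t2*h
      rcases mul_eq_zero.1 ha with h' | h'
      · exact hα h'
      · exact ht1 (pow_eq_zero_iff two_ne_zero |>.1 h')
    · have ha : t1^2 = 0 := by linear_combination β*t3*h - h1
      exact ht1 (pow_eq_zero_iff two_ne_zero |>.1 ha)

/-- if `H` is a quaternion algebra over a field `F` of characteristic ≠ 2 with
orthogonal involution `‡` and fixed subspace `H^+`, then every unit `u ∈ H^×` can be written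
as `u = 1 + x·y` with `x, y ∈ H^+`. -/
theorem stmt_2 (F H : Type*) [Field F] [Ring H] [Algebra F H]
    (hchar : (2 : F) ≠ 0)
    [Algebra.IsCentral F H] [IsSimpleRing H] (hdim : Module.finrank F H = 4)
    (dag : H → H) (hdag : IsOrthogonalInvolution F dag) :
    ∀ u : Hˣ, ∃ x y : H, dag x = x ∧ dag y = y ∧ (u : H) = 1 + x * y := by
  obtain ⟨hadd, hsmul, hmul, hinv, hrank⟩ := hdag
  intro u
  haveI : FiniteDimensional F H := FiniteDimensional.of_finrank_pos (by rw [hdim]; norm_num)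
  -- basic facts about dag
  have hdag1 : dag 1 = 1 := by
    have h := hmul (dag 1) 1
    rw [mul_one, hinv] at h
    rw [mul_one] at h
    exact h.symm
  have hdag0 : dag 0 = 0 := by
    have h := hsmul 0 1
    rwa [zero_smul, zero_smul] at h
  have hneg : ∀ x : H, dag (-x) = -dag x := by
    intro x
    have h := hadd x (-x)
    rw [add_neg_cancel, hdag0] at h
    exact (neg_eq_of_add_eq_zero_right h.symm).symm
  have hsub : ∀ x y : H, dag (x - y) = dag x - dag y := by
    intro x y
    rw [sub_eq_add_neg, hadd, hneg, sub_eq_add_neg]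
  -- the symmetric and skew submodules
  obtain ⟨Sym, hSym⟩ : ∃ S : Submodule F H, ∀ x, x ∈ S ↔ dag x = x :=
    ⟨{ carrier := {x | dag x = x},
       add_mem' := fun {a b} ha hb => by
         simp only [Set.mem_setOf_eq] at *; rw [hadd, ha, hb],
       zero_mem' := hdag0,
       smul_mem' := fun c x hx => by
         simp only [Set.mem_setOf_eq] at *; rw [hsmul, hx] },
     fun x => Iff.rfl⟩
  obtain ⟨Skew, hSkew⟩ : ∃ S : Submodule F H, ∀ x, x ∈ S ↔ dag x = -x :=
    ⟨{ carrier := {x | dag x = -x},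
       add_mem' := fun {a b} ha hb => by
         simp only [Set.mem_setOf_eq] at *; rw [hadd, ha, hb, neg_add],
       zero_mem' := by simp only [Set.mem_setOf_eq]; rw [hdag0, neg_zero],
       smul_mem' := fun c x hx => by
         simp only [Set.mem_setOf_eq] at *; rw [hsmul, hx, smul_neg] },
     fun x => Iff.rfl⟩
  have hSymrank : Module.finrank F Sym = 3 := by
    have hspan : Submodule.span F {x : H | dag x = x} = Sym :=
      le_antisymm (Submodule.span_le.2 fun x hx => (hSym x).2 hx)
        (fun x hx => Submodule.subset_span ((hSym x).1 hx))
    rwa [hspan] at hrank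
  have hhalf : (2:F)⁻¹ * 2 = 1 := inv_mul_cancel₀ hchar
  have hsup : Sym ⊔ Skew = ⊤ := by
    rw [eq_top_iff]
    rintro g -
    rw [Submodule.mem_sup]
    refine ⟨(2:F)⁻¹ • (g + dag g), (hSym _).2 ?_, (2:F)⁻¹ • (g - dag g), (hSkew _).2 ?_, ?_⟩
    · rw [hsmul, hadd, hinv, add_comm]
    · rw [hsmul, hsub, hinv, ← smul_neg, neg_sub]
    · match_scalars
      · linear_combination hhalf
      · ring
  have hinf : Sym ⊓ Skew = ⊥ := by
    rw [eq_bot_iff]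
    rintro x hx
    obtain ⟨hx1, hx2⟩ := Submodule.mem_inf.1 hx
    have h1 : dag x = x := (hSym x).1 hx1
    have h2 : dag x = -x := (hSkew x).1 hx2
    have h3 : (2:F) • x = 0 := by
      rw [two_smul]
      nth_rewrite 2 [← h1]
      rw [h2, add_neg_cancel]
    rcases smul_eq_zero.1 h3 with h | h
    · exact absurd h hchar
    · simp [h]
  have hSkewrank : Module.finrank F Skew = 1 := by
    have h := Submodule.finrank_sup_add_finrank_inf_eq Sym Skew
    rw [hsup, hinf, finrank_bot, finrank_top, hdim, hSymrank] at h
    omega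
  obtain ⟨s, hsSkew, hs0⟩ : ∃ s : H, s ∈ Skew ∧ s ≠ 0 := by
    apply Submodule.exists_mem_ne_zero_of_ne_bot
    intro hb
    rw [hb, finrank_bot] at hSkewrank
    omega
  have hdags : dag s = -s := (hSkew s).1 hsSkew
  have hspan_s : Submodule.span F {s} = Skew := by
    apply Submodule.eq_of_le_of_finrank_le
    · exact (Submodule.span_singleton_le_iff_mem s Skew).2 hsSkew
    · rw [hSkewrank, finrank_span_singleton hs0]
  have hskew_coord : ∀ z : H, dag z = -z → ∃ c : F, z = c • s := by
    intro z hz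
    have hmem : z ∈ Skew := (hSkew z).2 hz
    rw [← hspan_s] at hmem
    obtain ⟨c, hc⟩ := Submodule.mem_span_singleton.1 hmem
    exact ⟨c, hc.symm⟩
  have hf : ∀ x : H, dag x = x → ∃ c : F, s * x + x * s = c • s := by
    intro x hx
    apply hskew_coord
    rw [hadd, hmul, hmul, hx, hdags, mul_neg, neg_mul, neg_add]
    abel
  have hdecomp : ∀ g : H, ∃ (y : H) (c : F), dag y = y ∧ g = y + c • s := by
    intro g
    obtain ⟨c, hc⟩ := hskew_coord ((2:F)⁻¹ • (g - dag g))
      (by rw [hsmul, hsub, hinv, ← smul_neg, neg_sub])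
    refine ⟨(2:F)⁻¹ • (g + dag g), c, by rw [hsmul, hadd, hinv, add_comm], ?_⟩
    rw [← hc]
    match_scalars
    · linear_combination -hhalf
    · ring
  have hss_comm : ∀ g : H, g * (s * s) = (s * s) * g := by
    intro g
    obtain ⟨y, c, hy, rfl⟩ := hdecomp g
    obtain ⟨cy, hcy⟩ := hf y hy
    have hsy : s * y = cy • s - y * s := eq_sub_of_add_eq hcy
    have h1 : (s*s) * y = y * (s*s) := by
      calc (s*s)*y = s * (s*y) := by rw [mul_assoc]
      _ = s * (cy • s - y*s) := by rw [hsy]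
      _ = cy • (s*s) - (s*y)*s := by rw [mul_sub, mul_smul_comm, ← mul_assoc]
      _ = cy • (s*s) - (cy • s - y*s)*s := by rw [hsy]
      _ = y * (s*s) := by rw [sub_mul, smul_mul_assoc, mul_assoc]; abel
    rw [add_mul, mul_add, h1, smul_mul_assoc, mul_smul_comm, mul_assoc]
  obtain ⟨α, hαmap⟩ : ∃ a : F, algebraMap F H a = s * s := by
    have hc : s*s ∈ Subalgebra.center F H := Subalgebra.mem_center_iff.2 hss_comm
    have hb := Algebra.IsCentral.out hc
    exact Algebra.mem_bot.1 hb
  have hss : s * s = α • (1:H) := by rw [← hαmap, Algebra.algebraMap_eq_smul_one]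
  -- α ≠ 0 via simplicity
  have hα0 : α ≠ 0 := by
    intro hα
    rw [hα, zero_smul] at hss
    have hshs : ∀ g : H, s * g * s = 0 := by
      intro g
      obtain ⟨y, c, hy, rfl⟩ := hdecomp g
      obtain ⟨cy, hcy⟩ := hf y hy
      have hsy : s * y = cy • s - y * s := eq_sub_of_add_eq hcy
      have h1 : (s*y)*s = 0 := by
        rw [hsy, sub_mul, smul_mul_assoc, hss, smul_zero, mul_assoc, hss, mul_zero, sub_zero]
      have h2 : (s*(c • s))*s = 0 := by
        rw [mul_smul_comm, hss, smul_zero, zero_mul]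
      rw [mul_add, add_mul, h1, h2, add_zero]
    set gens : Set H := {w : H | ∃ a b : H, w = a * s * b} with hgens
    have hmull : ∀ (x q : H), q ∈ Submodule.span F gens → x * q ∈ Submodule.span F gens := by
      intro x q hq
      induction hq using Submodule.span_induction with
      | mem w hw =>
        obtain ⟨a, b, rfl⟩ := hw
        exact Submodule.subset_span ⟨x*a, b, by simp only [mul_assoc]⟩
      | zero => rw [mul_zero]; exact zero_mem _
      | add a b _ _ iha ihb => rw [mul_add]; exact add_mem iha ihb
      | smul c a _ iha => rw [mul_smul_comm]; exact Submodule.smul_mem _ _ iha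
    have hmulr : ∀ (x q : H), q ∈ Submodule.span F gens → q * x ∈ Submodule.span F gens := by
      intro x q hq
      induction hq using Submodule.span_induction with
      | mem w hw =>
        obtain ⟨a, b, rfl⟩ := hw
        exact Submodule.subset_span ⟨a, b*x, by simp only [mul_assoc]⟩
      | zero => rw [zero_mul]; exact zero_mem _
      | add a b _ _ iha ihb => rw [add_mul]; exact add_mem iha ihb
      | smul c a _ iha => rw [smul_mul_assoc]; exact Submodule.smul_mem _ _ iha
    have hprod : ∀ p ∈ Submodule.span F gens, ∀ q ∈ Submodule.span F gens, p * q = 0 := by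
      intro p hp
      induction hp using Submodule.span_induction with
      | mem w hw =>
        intro q hq
        induction hq using Submodule.span_induction with
        | mem w' hw' =>
          obtain ⟨a, b, rfl⟩ := hw
          obtain ⟨a', b', rfl⟩ := hw'
          have : a*s*b*(a'*s*b') = a*(s*(b*a')*s)*b' := by simp only [mul_assoc]
          rw [this, hshs, mul_zero, zero_mul]
        | zero => rw [mul_zero]
        | add a b _ _ iha ihb => rw [mul_add, iha, ihb, add_zero]
        | smul c a _ iha => rw [mul_smul_comm, iha, smul_zero]
      | zero => intro q hq; rw [zero_mul]
      | add p1 p2 _ _ ih1 ih2 => intro q hq; rw [add_mul, ih1 q hq, ih2 q hq, add_zero]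
      | smul c p _ ih => intro q hq; rw [smul_mul_assoc, ih q hq, smul_zero]
    have hsI : s ∈ Submodule.span F gens :=
      Submodule.subset_span ⟨1, 1, by rw [one_mul, mul_one]⟩
    let I : TwoSidedIdeal H := TwoSidedIdeal.mk' (Submodule.span F gens : Set H)
      (zero_mem _) (fun ha hb => add_mem ha hb) (fun ha => neg_mem ha)
      (fun {x y} hb => hmull x y hb) (fun {x y} ha => hmulr y x ha)
    have h1I : (1:H) ∈ I :=
      IsSimpleRing.one_mem_of_ne_zero_mem I hs0 ((TwoSidedIdeal.mem_mk' _ _ _ _ _ _ s).2 hsI)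
    have h1 : (1:H) ∈ Submodule.span F gens := (TwoSidedIdeal.mem_mk' _ _ _ _ _ _ 1).1 h1I
    have h0 : (1:H) = 0 := by
      have := hprod 1 h1 1 h1
      rwa [one_mul] at this
    exact one_ne_zero h0
  -- symmetric elements commuting with s are scalar
  have hcomm_scalar : ∀ x : H, dag x = x → s * x = x * s → ∃ k : F, x = k • 1 := by
    intro x hx hcx
    obtain ⟨c, hc⟩ := hf x hx
    rw [← hcx, ← two_smul F] at hc
    have h3 : s * ((2:F) • x - c • (1:H)) = 0 := by
      rw [mul_sub, mul_smul_comm, mul_smul_comm, mul_one, hc, sub_self]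
    have h4 : (s*s) * ((2:F) • x - c • (1:H)) = 0 := by rw [mul_assoc, h3, mul_zero]
    rw [hss, smul_mul_assoc, one_mul] at h4
    have h5 : (2:F) • x - c • (1:H) = 0 := by
      rcases smul_eq_zero.1 h4 with h | h
      · exact absurd h hα0
      · exact h
    have h6 : (2:F) • x = c • (1:H) := by rwa [sub_eq_zero] at h5
    refine ⟨c/2, ?_⟩
    calc x = ((2:F)⁻¹ * 2) • x := by rw [hhalf, one_smul]
    _ = (2:F)⁻¹ • ((2:F) • x) := by rw [mul_smul]
    _ = (2:F)⁻¹ • (c • (1:H)) := by rw [h6]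
    _ = (c/2) • 1 := by rw [smul_smul]; congr 1; ring
  -- the submodule V of symmetric elements anticommuting with s
  obtain ⟨V, hV⟩ : ∃ S : Submodule F H, ∀ x, x ∈ S ↔ (dag x = x ∧ s * x + x * s = 0) :=
    ⟨{ carrier := {x | dag x = x ∧ s * x + x * s = 0},
       add_mem' := fun {a b} ha hb => by
         simp only [Set.mem_setOf_eq] at *
         refine ⟨by rw [hadd, ha.1, hb.1], ?_⟩
         have : s*(a+b) + (a+b)*s = (s*a + a*s) + (s*b + b*s) := by noncomm_ring
         rw [this, ha.2, hb.2, add_zero]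
       zero_mem' := by
         simp only [Set.mem_setOf_eq]
         exact ⟨hdag0, by rw [mul_zero, zero_mul, add_zero]⟩
       smul_mem' := fun c x hx => by
         simp only [Set.mem_setOf_eq] at *
         refine ⟨by rw [hsmul, hx.1], ?_⟩
         rw [mul_smul_comm, smul_mul_assoc, ← smul_add, hx.2, smul_zero] },
     fun x => Iff.rfl⟩
  have hsymdecomp : ∀ x : H, dag x = x → ∃ (k : F) (w : H), w ∈ V ∧ x = k • 1 + w := by
    intro x hx
    obtain ⟨c, hc⟩ := hf x hx
    refine ⟨c/2, x - (c/2) • 1, (hV _).2 ⟨?_, ?_⟩, by abel⟩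
    · rw [hsub, hx, hsmul, hdag1]
    · have he : s*(x - (c/2) • 1) + (x - (c/2) • 1)*s = (s*x + x*s) - ((c/2)*2) • s := by
        rw [mul_sub, sub_mul, mul_smul_comm, smul_mul_assoc, mul_one, one_mul]
        match_scalars <;> ring
      rw [he, hc, div_mul_cancel₀ c hchar, sub_self]
  -- pairwise products of elements of V
  have hVanti : ∀ x, x ∈ V → s * x = -(x * s) := by
    intro x hx
    exact eq_neg_of_add_eq_zero_left ((hV x).1 hx).2
  have hsVmem : ∀ w, w ∈ V → s * w ∈ V := by
    intro w hw
    obtain ⟨hdw, hsw⟩ := (hV w).1 hw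
    have hws : w * s = -(s*w) := by rw [hVanti w hw, neg_neg]
    refine (hV _).2 ⟨?_, ?_⟩
    · rw [hmul, hdw, hdags, mul_neg, hws, neg_neg]
    · have h1 : s*(s*w) = α • w := by rw [← mul_assoc, hss, smul_mul_assoc, one_mul]
      have h2 : (s*w)*s = -(α • w) := by rw [mul_assoc, hws, mul_neg, h1]
      rw [h1, h2, add_neg_cancel]
  have hVV : ∀ p, p ∈ V → ∀ q, q ∈ V → ∃ k : F, p*q + q*p = k • 1 := by
    intro p hp q hq
    obtain ⟨hdp, _⟩ := (hV p).1 hp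
    obtain ⟨hdq, _⟩ := (hV q).1 hq
    have hsp : s*p = -(p*s) := hVanti p hp
    have hsq : s*q = -(q*s) := hVanti q hq
    apply hcomm_scalar
    · rw [hadd, hmul, hmul, hdp, hdq]; abel
    · have h1 : s*(p*q) = (p*q)*s := by
        rw [← mul_assoc, hsp, neg_mul, mul_assoc, hsq, mul_neg, neg_neg, ← mul_assoc]
      have h2 : s*(q*p) = (q*p)*s := by
        rw [← mul_assoc, hsq, neg_mul, mul_assoc, hsp, mul_neg, neg_neg, ← mul_assoc]
      rw [mul_add, add_mul, h1, h2]
  -- existence of an anisotropic vector in V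
  have hvexist : ∃ (v : H) (β : F), v ∈ V ∧ v * v = β • 1 ∧ β ≠ 0 := by
    have hv2 : ∀ w, w ∈ V → ∃ k : F, w * w = k • 1 := by
      intro w hw
      obtain ⟨hdw, _⟩ := (hV w).1 hw
      have hws : w * s = -(s*w) := by rw [hVanti w hw, neg_neg]
      apply hcomm_scalar
      · rw [hmul, hdw]
      · rw [← mul_assoc, hVanti w hw, neg_mul, mul_assoc, hVanti w hw, mul_neg, neg_neg, ← mul_assoc]
    by_contra hcon
    push_neg at hcon
    have hsq : ∀ w, w ∈ V → w * w = 0 := by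
      intro w hw
      obtain ⟨k, hk⟩ := hv2 w hw
      have hk0 := hcon w k hw hk
      rw [hk, hk0, zero_smul]
    -- V is nonzero
    obtain ⟨v, hvV, hv0⟩ : ∃ v : H, v ∈ V ∧ v ≠ 0 := by
      apply Submodule.exists_mem_ne_zero_of_ne_bot
      intro hb
      have hle : Sym ≤ Submodule.span F {(1:H)} := by
        intro x hx
        obtain ⟨k, w, hwV, rfl⟩ := hsymdecomp x ((hSym x).1 hx)
        rw [hb] at hwV
        rw [(Submodule.mem_bot F).1 hwV, add_zero]
        exact Submodule.smul_mem _ _ (Submodule.mem_span_singleton_self 1)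
      have hle2 := Submodule.finrank_mono hle
      rw [hSymrank, finrank_span_singleton (one_ne_zero : (1:H) ≠ 0)] at hle2
      omega
    have hvs0 : v * s ≠ 0 := by
      intro hvs
      have : v * (s * s) = 0 := by rw [← mul_assoc, hvs, zero_mul]
      rw [hss, mul_smul_comm, mul_one] at this
      rcases smul_eq_zero.1 this with h | h
      · exact hα0 h
      · exact hv0 h
    have hsv0 : s * v ≠ 0 := by
      rw [hVanti v hvV]
      simpa using hvs0
    have hanti : ∀ p, p ∈ V → ∀ q, q ∈ V → p*q + q*p = 0 := by
      intro p hp q hq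
      have h := hsq (p + q) (add_mem hp hq)
      have hexp : (p+q)*(p+q) = p*p + (p*q + q*p) + q*q := by noncomm_ring
      rw [hexp, hsq p hp, hsq q hq, zero_add, add_zero] at h
      exact h
    have hskewprod : ∀ p, p ∈ V → ∀ q, q ∈ V → dag (p*q) = -(p*q) := by
      intro p hp q hq
      obtain ⟨hdp, _⟩ := (hV p).1 hp
      obtain ⟨hdq, _⟩ := (hV q).1 hq
      rw [hmul, hdp, hdq]
      exact eq_neg_of_add_eq_zero_right (hanti p hp q hq)
    have hvw0 : ∀ w, w ∈ V → v * w = 0 := by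
      intro w hw
      obtain ⟨lam, hlam⟩ := hskew_coord (v*w) (hskewprod v hvV w hw)
      have h1 : v * (v * w) = 0 := by rw [← mul_assoc, hsq v hvV, zero_mul]
      rw [hlam, mul_smul_comm] at h1
      rcases smul_eq_zero.1 h1 with h | h
      · rw [hlam, h, zero_smul]
      · exact absurd h hvs0
    have hsvV : s * v ∈ V := hsVmem v hvV
    have hwsv0 : ∀ w, w ∈ V → w * (s*v) = 0 := by
      intro w hw
      obtain ⟨mu, hmu⟩ := hskew_coord (w*(s*v)) (hskewprod w hw (s*v) hsvV)
      have h1 : (w * (s*v)) * v = 0 := by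
        rw [mul_assoc, mul_assoc, hsq v hvV, mul_zero, mul_zero]
      rw [hmu, smul_mul_assoc] at h1
      rcases smul_eq_zero.1 h1 with h | h
      · rw [hmu, h, zero_smul]
      · exact absurd h hsv0
    have hsvw0 : ∀ w, w ∈ V → (s*v) * w = 0 := by
      intro w hw
      have h := hanti (s*v) hsvV w hw
      rw [hwsv0 w hw, add_zero] at h
      exact h
    have hwv0 : ∀ w, w ∈ V → w * v = 0 := by
      intro w hw
      have h := hanti v hvV w hw
      rw [hvw0 w hw, zero_add] at h
      exact h
    -- the span of {v, s*v} is a proper nonzero two-sided ideal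
    have hdecomp3 : ∀ g : H, ∃ (k c : F) (w : H), w ∈ V ∧ g = k • 1 + w + c • s := by
      intro g
      obtain ⟨y, c, hy, rfl⟩ := hdecomp g
      obtain ⟨k, w, hwV, hky⟩ := hsymdecomp y hy
      exact ⟨k, c, w, hwV, by rw [hky]⟩
    have hvs' : v * s = -(s*v) := by rw [hVanti v hvV, neg_neg]
    have hs_sv : s * (s*v) = α • v := by rw [← mul_assoc, hss, smul_mul_assoc, one_mul]
    have hsv_s : (s*v) * s = -(α • v) := by rw [mul_assoc, hvs', mul_neg, hs_sv]
    have hvmem : v ∈ Submodule.span F {v, s*v} :=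
      Submodule.subset_span (Set.mem_insert _ _)
    have hsvmem : s*v ∈ Submodule.span F {v, s*v} :=
      Submodule.subset_span (Set.mem_insert_of_mem _ rfl)
    have hmulJl : ∀ (x q : H), q ∈ Submodule.span F {v, s*v} →
        x * q ∈ Submodule.span F {v, s*v} := by
      intro x q hq
      obtain ⟨a, b, hab⟩ := Submodule.mem_span_pair.1 hq
      obtain ⟨k, c, w, hwV, rfl⟩ := hdecomp3 x
      have hxv : (k • 1 + w + c • s) * v = k • v + c • (s*v) := by
        rw [add_mul, add_mul, smul_mul_assoc, smul_mul_assoc, one_mul, hwv0 w hwV, add_zero]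
      have hxsv : (k • 1 + w + c • s) * (s*v) = k • (s*v) + (c*α) • v := by
        rw [add_mul, add_mul, smul_mul_assoc, smul_mul_assoc, one_mul,
          hwsv0 w hwV, add_zero, hs_sv, smul_smul]
      rw [← hab, mul_add, mul_smul_comm, mul_smul_comm, hxv, hxsv]
      refine add_mem (Submodule.smul_mem _ _ ?_) (Submodule.smul_mem _ _ ?_)
      · exact add_mem (Submodule.smul_mem _ _ hvmem) (Submodule.smul_mem _ _ hsvmem)
      · exact add_mem (Submodule.smul_mem _ _ hsvmem) (Submodule.smul_mem _ _ hvmem)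
    have hmulJr : ∀ (x q : H), q ∈ Submodule.span F {v, s*v} →
        q * x ∈ Submodule.span F {v, s*v} := by
      intro x q hq
      obtain ⟨a, b, hab⟩ := Submodule.mem_span_pair.1 hq
      obtain ⟨k, c, w, hwV, rfl⟩ := hdecomp3 x
      have hxv : v * (k • 1 + w + c • s) = k • v + (-c) • (s*v) := by
        rw [mul_add, mul_add, mul_smul_comm, mul_smul_comm, mul_one, hvw0 w hwV, add_zero,
          hvs', smul_neg, ← neg_smul]
      have hxsv : (s*v) * (k • 1 + w + c • s) = k • (s*v) + (-(c*α)) • v := by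
        rw [mul_add, mul_add, mul_smul_comm, mul_smul_comm, mul_one,
          hsvw0 w hwV, add_zero, hsv_s, smul_neg, smul_smul, ← neg_smul]
      rw [← hab, add_mul, smul_mul_assoc, smul_mul_assoc, hxv, hxsv]
      refine add_mem (Submodule.smul_mem _ _ ?_) (Submodule.smul_mem _ _ ?_)
      · exact add_mem (Submodule.smul_mem _ _ hvmem) (Submodule.smul_mem _ _ hsvmem)
      · exact add_mem (Submodule.smul_mem _ _ hsvmem) (Submodule.smul_mem _ _ hvmem)
    let J : TwoSidedIdeal H := TwoSidedIdeal.mk' (Submodule.span F {v, s*v} : Set H)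
      (zero_mem _) (fun ha hb => add_mem ha hb) (fun ha => neg_mem ha)
      (fun {x y} hb => hmulJl x y hb) (fun {x y} ha => hmulJr y x ha)
    have h1J : (1:H) ∈ J :=
      IsSimpleRing.one_mem_of_ne_zero_mem J hv0 ((TwoSidedIdeal.mem_mk' _ _ _ _ _ _ v).2 hvmem)
    obtain ⟨a, b, hab⟩ :=
      Submodule.mem_span_pair.1 ((TwoSidedIdeal.mem_mk' _ _ _ _ _ _ (1:H)).1 h1J)
    have hcontr : (2:F) • s = 0 := by
      have e1 : s * (a • v + b • (s*v)) + (a • v + b • (s*v)) * s = (2:F) • s := by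
        rw [hab, mul_one, one_mul, two_smul]
      rw [mul_add, add_mul, mul_smul_comm, mul_smul_comm, smul_mul_assoc, smul_mul_assoc,
        hs_sv, hsv_s, hvs'] at e1
      rw [← e1]
      module
    rcases smul_eq_zero.1 hcontr with h | h
    · exact hchar h
    · exact hs0 h
  -- ============ main construction ============
  obtain ⟨v, β, hvV, hvv, hβ0⟩ := hvexist
  have hdagv : dag v = v := ((hV v).1 hvV).1
  have hvs : v * s = -(s*v) := by rw [hVanti v hvV, neg_neg]
  have hsvV : s*v ∈ V := hsVmem v hvV
  have hdagw : dag (s*v) = s*v := ((hV _).1 hsvV).1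
  have hv0 : v ≠ 0 := by
    intro h
    rw [h, zero_mul] at hvv
    rcases smul_eq_zero.1 hvv.symm with h' | h'
    · exact hβ0 h'
    · exact one_ne_zero h'
  have hwv : (s*v)*v = β • s := by rw [mul_assoc, hvv, mul_smul_comm, mul_one]
  have hvw : v*(s*v) = -(β • s) := by rw [← mul_assoc, hvs, neg_mul, hwv]
  have hs_sv : s*(s*v) = α • v := by rw [← mul_assoc, hss, smul_mul_assoc, one_mul]
  have hsv_s : (s*v)*s = -(α • v) := by rw [mul_assoc, hvs, mul_neg, hs_sv]
  have hww : (s*v)*(s*v) = -((β*α) • (1:H)) := by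
    rw [mul_assoc s v (s*v), hvw, mul_neg, mul_smul_comm, hss, smul_smul]
  -- spanning of V by {v, s*v}
  have hVspan : ∀ x, x ∈ V → ∃ a b : F, x = a • v + b • (s*v) := by
    intro x hx
    have hdx : dag x = x := ((hV x).1 hx).1
    obtain ⟨k, hk⟩ := hVV v hvV x hx
    obtain ⟨m, hm⟩ := hVV (s*v) hsvV x hx
    obtain ⟨a, h2a⟩ : ∃ a : F, 2*β*a = k :=
      ⟨k/(2*β), by rw [mul_comm, div_mul_cancel₀ k (mul_ne_zero hchar hβ0)]⟩
    obtain ⟨b, h2b⟩ : ∃ b : F, 2*(α*β)*b = -m :=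
      ⟨-m/(2*(α*β)), by rw [mul_comm, div_mul_cancel₀ _ (mul_ne_zero hchar (mul_ne_zero hα0 hβ0))]⟩
    set r := x - a • v - b • (s*v) with hrdef
    have hrV : r ∈ V := by
      exact sub_mem (sub_mem hx (Submodule.smul_mem _ _ hvV)) (Submodule.smul_mem _ _ hsvV)
    have hdr : dag r = r := ((hV r).1 hrV).1
    have hxv' : x*v = k • (1:H) - v*x := eq_sub_of_add_eq' hk
    have hxsv' : x*(s*v) = m • (1:H) - (s*v)*x := eq_sub_of_add_eq' hm
    have hvr : v*r + r*v = 0 := by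
      rw [hrdef]
      simp only [mul_sub, sub_mul, mul_smul_comm, smul_mul_assoc, hvv, hvw, hwv, hxv']
      match_scalars
      all_goals first
        | ring1
        | linear_combination h2a
        | linear_combination -h2a
    have hsvr0 : (s*v)*r + r*(s*v) = 0 := by
      rw [hrdef]
      simp only [mul_sub, sub_mul, mul_smul_comm, smul_mul_assoc, hvw, hwv, hww, hxsv']
      match_scalars
      all_goals first
        | ring1
        | linear_combination h2b
        | linear_combination -h2b
    obtain ⟨mu, hmu⟩ := hskew_coord ((s*v)*r) (by
      rw [hmul, hdagw, hdr]
      exact eq_neg_of_add_eq_zero_right hsvr0)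
    have hvsvr : (v*(s*v))*r = mu • (v*s) := by rw [mul_assoc, hmu, mul_smul_comm]
    rw [hvw, hvs] at hvsvr
    -- hvsvr : (-(β • s)) * r = mu • -(s*v)
    have hkey : s * (β • r - mu • v) = 0 := by
      have h1 : β • (s * r) = mu • (s*v) := by
        have h2 := hvsvr
        rw [neg_mul, smul_mul_assoc, smul_neg] at h2
        exact neg_injective h2
      rw [mul_sub, mul_smul_comm, mul_smul_comm, h1, sub_self]
    have hkey2 : α • (β • r - mu • v) = 0 := by
      have h3 : (s*s) * (β • r - mu • v) = 0 := by rw [mul_assoc, hkey, mul_zero]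
      rwa [hss, smul_mul_assoc, one_mul] at h3
    have hkey3 : β • r = mu • v := by
      rcases smul_eq_zero.1 hkey2 with h | h
      · exact absurd h hα0
      · rwa [sub_eq_zero] at h
    have hmu0 : mu = 0 := by
      have h4 : β • (v*r + r*v) = (2*(mu*β)) • (1:H) := by
        rw [smul_add, ← mul_smul_comm, ← smul_mul_assoc, hkey3, mul_smul_comm,
          smul_mul_assoc, hvv]
        match_scalars
        ring
      rw [hvr, smul_zero] at h4
      have h5 : (2*(mu*β)) = 0 := by
        rcases smul_eq_zero.1 h4.symm with h | h
        · exact h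
        · exact absurd h one_ne_zero
      rcases mul_eq_zero.1 h5 with h | h
      · exact absurd h hchar
      rcases mul_eq_zero.1 h with h | h
      · exact h
      · exact absurd h hβ0
    have hr0 : r = 0 := by
      rw [hmu0, zero_smul] at hkey3
      rcases smul_eq_zero.1 hkey3 with h | h
      · exact absurd h hβ0
      · exact h
    refine ⟨a, b, ?_⟩
    have := hrdef ▸ hr0
    rw [sub_sub, sub_eq_zero] at this
    exact this
  -- coordinates of u - 1 and conclusion
  obtain ⟨y0, c1, hy0, hty⟩ := hdecomp ((u:H) - 1)
  obtain ⟨t0, w0, hw0V, hw0⟩ := hsymdecomp y0 hy0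
  obtain ⟨t2, t3, hw0'⟩ := hVspan w0 hw0V
  have ht : (u:H) - 1 = t0 • 1 + c1 • s + t2 • v + t3 • (s*v) := by
    rw [hty, hw0, hw0']
    module
  obtain ⟨x, y, hx, hy, hxy⟩ := quat_prod hchar dag hadd hsmul s v α β hα0 hβ0 hss hvv hvs
    hdag1 hdags hdagv hdagw _ t0 c1 t2 t3 ht
  refine ⟨x, y, hx, hy, ?_⟩
  rw [hxy]
  abel
end

section
/- Let H be a quaternion algebra over ℚ with orthogonal involution ‡, let 𝒪 be a maximal ‡-order of H, and let Γ be a subgroup of SL^‡(2,H) that is commensurable with SL^‡(2,𝒪) (i.e. Γ ∩ SL^‡(2,𝒪) has finite index in both Γ and SL^‡(2,𝒪)). Then the subring ℤ[Γ] of Mat(2,H) generated by Γ is finitely generated as a ℤ-module, i.e. it is an order of the central simple algebra Mat(2,H). -/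
/-- `𝒪` is an order of the rational quaternion algebra `H`: a subring (hence containing `ℤ`)
finitely generated as a `ℤ`-module and spanning `H` over `ℚ`. -/
def IsZOrder {H : Type*} [Ring H] [Algebra ℚ H] (𝒪 : Subring H) : Prop :=
  (∃ s : Finset H, (s : Set H) ⊆ 𝒪 ∧ ∀ x ∈ 𝒪, x ∈ Submodule.span ℤ (s : Set H)) ∧
  Submodule.span ℚ (𝒪 : Set H) = ⊤

/-- `𝒪` is a maximal `‡`-order. -/
def IsMaximalDagOrder {H : Type*} [Ring H] [Algebra ℚ H] (dag : H → H) (𝒪 : Subring H) :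
    Prop :=
  IsZOrder 𝒪 ∧ dag '' (𝒪 : Set H) = (𝒪 : Set H) ∧
  ∀ 𝒪' : Subring H, IsZOrder 𝒪' → dag '' (𝒪' : Set H) = (𝒪' : Set H) → 𝒪 ≤ 𝒪' → 𝒪' = 𝒪

/-- `S` has finite index in `A`: finitely many left translates of `S` cover `A`. -/
def FinIdxIn {M : Type*} [Monoid M] (S A : Set M) : Prop :=
  ∃ T : Finset M, ∀ a ∈ A, ∃ t ∈ T, ∃ s ∈ S, a = t * s

/-- `A` and `B` are commensurable: `A ∩ B` has finite index in both `A` and `B`. -/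
def SetCommensurable {M : Type*} [Monoid M] (A B : Set M) : Prop :=
  FinIdxIn (A ∩ B) A ∧ FinIdxIn (A ∩ B) B

/-- A submodule contained in a finitely generated submodule over a Noetherian ring is
finitely generated. -/
lemma fg_of_le_fg {R M : Type*} [Ring R] [IsNoetherianRing R] [AddCommGroup M] [Module R M]
    {N P : Submodule R M} (h : N ≤ P) (hP : P.FG) : N.FG := by
  have : IsNoetherian R P := isNoetherian_of_fg_of_noetherian P hP
  have h1 : (N.comap P.subtype).FG := IsNoetherian.noetherian _
  have h2 : (N.comap P.subtype).map P.subtype = N := by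
    rw [Submodule.map_comap_subtype, inf_eq_right.mpr h]
  exact h2 ▸ h1.map _


/-- if `Γ` is an arithmetic subgroup of `SL^‡(2,H)` (a subgroup commensurable
with `SL^‡(2,𝒪)` for a maximal `‡`-order `𝒪` of the rational quaternion algebra `H`), then
the subring `ℤ[Γ]` of `Mat(2,H)` generated by `Γ` is finitely generated as a `ℤ`-module,
i.e. an order of the central simple algebra `Mat(2,H)`. -/


theorem stmt_10 (H : Type*) [Ring H] [Algebra ℚ H]
    [Algebra.IsCentral ℚ H] [IsSimpleRing H] (hdim : Module.finrank ℚ H = 4)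
    (dag : H → H) (hdag : IsOrthogonalInvolution ℚ dag)
    (𝒪 : Subring H) (h𝒪 : IsMaximalDagOrder dag 𝒪)
    (Γ : Set (Matrix (Fin 2) (Fin 2) H))
    (hΓsub : Γ ⊆ SLdag dag) (hΓone : (1 : Matrix (Fin 2) (Fin 2) H) ∈ Γ)
    (hΓmul : ∀ a ∈ Γ, ∀ b ∈ Γ, a * b ∈ Γ)
    (hΓinv : ∀ a ∈ Γ, ∃ b ∈ Γ, a * b = 1 ∧ b * a = 1)
    (hcomm : SetCommensurable Γ
      (SLdag dag ∩ {M : Matrix (Fin 2) (Fin 2) H | ∀ i j, M i j ∈ 𝒪})) :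
    (Subring.closure Γ).toAddSubgroup.FG := by
  classical
  obtain ⟨⟨⟨s, hs𝒪, hspan⟩, -⟩, -, -⟩ := h𝒪
  obtain ⟨⟨T, hT⟩, -⟩ := hcomm
  -- the lattice of matrices with entries in `𝒪`
  set Λ : Set (Matrix (Fin 2) (Fin 2) H) := {M | ∀ i j, M i j ∈ 𝒪} with hΛdef
  have hΛ1 : (1 : Matrix (Fin 2) (Fin 2) H) ∈ Λ := by
    intro i j
    by_cases h : i = j
    · simp [Matrix.one_apply, h, Subring.one_mem]
    · simp [Matrix.one_apply, h, Subring.zero_mem]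
  have hΛmul : ∀ m ∈ Λ, ∀ n ∈ Λ, m * n ∈ Λ := by
    intro m hm n hn i j
    rw [Matrix.mul_apply]
    exact Subring.sum_mem _ fun k _ => Subring.mul_mem _ (hm i k) (hn k j)
  -- `Λ` is contained in a finitely generated ℤ-submodule
  set f : Fin 2 → Fin 2 → H →ₗ[ℤ] Matrix (Fin 2) (Fin 2) H := fun i j =>
    { toFun := Matrix.single i j
      map_add' := fun a b => Matrix.single_add i j a b
      map_smul' := fun z a => (Matrix.smul_single z i j a).symm } with hfdef
  set genΛ : Finset (Matrix (Fin 2) (Fin 2) H) :=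
    (Finset.univ ×ˢ Finset.univ ×ˢ s).image
      (fun p : Fin 2 × Fin 2 × H => Matrix.single p.1 p.2.1 p.2.2) with hgenΛ
  have hΛspan : ∀ m ∈ Λ, m ∈ Submodule.span ℤ (genΛ : Set (Matrix (Fin 2) (Fin 2) H)) := by
    intro m hm
    rw [Matrix.matrix_eq_sum_single m]
    refine Submodule.sum_mem _ fun i _ => Submodule.sum_mem _ fun j _ => ?_
    have h1 : m i j ∈ Submodule.span ℤ (s : Set H) := hspan _ (hm i j)
    have h2 : f i j (m i j) ∈ Submodule.map (f i j) (Submodule.span ℤ (s : Set H)) :=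
      Submodule.mem_map_of_mem h1
    rw [Submodule.map_span] at h2
    have h3 : (⇑(f i j)) '' (s : Set H) ⊆ (genΛ : Set (Matrix (Fin 2) (Fin 2) H)) := by
      rintro _ ⟨a, ha, rfl⟩
      refine Finset.mem_coe.mpr (Finset.mem_image.mpr ⟨(i, j, a), ?_, rfl⟩)
      simpa using ha
    exact Submodule.span_mono h3 h2
  -- the lattice `L` spanned by `(insert 1 Γ) * Λ`
  set gensL : Set (Matrix (Fin 2) (Fin 2) H) :=
    {x | ∃ g ∈ insert (1 : Matrix (Fin 2) (Fin 2) H) Γ, ∃ m ∈ Λ, x = g * m} with hgensLdef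
  set L := Submodule.span ℤ gensL with hLdef
  have hmemL : ∀ g ∈ insert (1 : Matrix (Fin 2) (Fin 2) H) Γ, ∀ m ∈ Λ, g * m ∈ L :=
    fun g hg m hm => Submodule.subset_span ⟨g, hg, m, hm, rfl⟩
  have h1L : (1 : Matrix (Fin 2) (Fin 2) H) ∈ L := by
    have := hmemL 1 (Set.mem_insert _ _) 1 hΛ1
    rwa [one_mul] at this
  -- `Γ` stabilizes `L`
  have hstab : ∀ γ ∈ Γ, ∀ x ∈ L, γ * x ∈ L := by
    intro γ hγ x hx
    have hle : L ≤ Submodule.comap (LinearMap.mulLeft ℤ γ) L := by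
      refine Submodule.span_le.mpr ?_
      rintro _ ⟨g, hg, m, hm, rfl⟩
      have hγg : γ * g ∈ insert (1 : Matrix (Fin 2) (Fin 2) H) Γ := by
        rcases Set.mem_insert_iff.mp hg with h | h
        · rw [h, mul_one]; exact Set.mem_insert_iff.mpr (Or.inr hγ)
        · exact Set.mem_insert_iff.mpr (Or.inr (hΓmul γ hγ g h))
      have heq : γ * (g * m) = (γ * g) * m := (mul_assoc _ _ _).symm
      have hmem : (LinearMap.mulLeft ℤ γ) (g * m) ∈ L := by
        rw [LinearMap.mulLeft_apply, heq]
        exact hmemL _ hγg m hm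
      exact hmem
    exact hle hx
  -- `L` is finitely generated
  set gensBig : Finset (Matrix (Fin 2) (Fin 2) H) :=
    ((insert (1 : Matrix (Fin 2) (Fin 2) H) T) ×ˢ genΛ).image (fun p => p.1 * p.2) with hgensBig
  have key : ∀ t ∈ insert (1 : Matrix (Fin 2) (Fin 2) H) T, ∀ n ∈ Λ,
      t * n ∈ Submodule.span ℤ (gensBig : Set (Matrix (Fin 2) (Fin 2) H)) := by
    intro t ht n hn
    have h2 : LinearMap.mulLeft ℤ t n ∈ Submodule.map (LinearMap.mulLeft ℤ t)
        (Submodule.span ℤ (genΛ : Set (Matrix (Fin 2) (Fin 2) H))) :=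
      Submodule.mem_map_of_mem (hΛspan n hn)
    rw [Submodule.map_span] at h2
    refine Submodule.span_mono ?_ h2
    rintro _ ⟨b, hb, rfl⟩
    exact Finset.mem_coe.mpr (Finset.mem_image.mpr
      ⟨(t, b), Finset.mem_product.mpr ⟨ht, Finset.mem_coe.mp hb⟩, rfl⟩)
  have hLbig : L ≤ Submodule.span ℤ (gensBig : Set (Matrix (Fin 2) (Fin 2) H)) := by
    refine Submodule.span_le.mpr ?_
    rintro _ ⟨g, hg, m, hm, rfl⟩
    rcases Set.mem_insert_iff.mp hg with h | h
    · rw [h]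
      exact key 1 (Finset.mem_insert_self _ _) m hm
    · obtain ⟨t, ht, σ, hσ, hEq⟩ := hT g h
      have hσΛ : σ ∈ Λ := hσ.2.2
      rw [hEq, mul_assoc]
      exact key t (Finset.mem_insert_of_mem ht) _ (hΛmul σ hσΛ m hm)
  have hLFG : L.FG := fg_of_le_fg hLbig ⟨gensBig, rfl⟩
  -- the left order of `L` is a subring containing `Γ` and contained in `L`
  set R : Subring (Matrix (Fin 2) (Fin 2) H) :=
    { carrier := {x | ∀ y ∈ L, x * y ∈ L}
      one_mem' := fun y hy => by rwa [one_mul]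
      mul_mem' := fun {a b} ha hb y hy => by rw [mul_assoc]; exact ha _ (hb y hy)
      add_mem' := fun {a b} ha hb y hy => by
        rw [add_mul]; exact Submodule.add_mem _ (ha y hy) (hb y hy)
      zero_mem' := fun y hy => by rw [zero_mul]; exact Submodule.zero_mem _
      neg_mem' := fun {a} ha y hy => by
        rw [neg_mul]; exact Submodule.neg_mem _ (ha y hy) } with hRdef
  have hclos : Subring.closure Γ ≤ R :=
    Subring.closure_le.mpr (fun γ hγ y hy => hstab γ hγ y hy)
  have hRL : ∀ x ∈ R, x ∈ L := by
    intro x hx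
    have := hx 1 h1L
    rwa [mul_one] at this
  -- conclude
  have hfg : (AddSubgroup.toIntSubmodule (Subring.closure Γ).toAddSubgroup).FG :=
    fg_of_le_fg (fun x hx => hRL x (hclos hx)) hLFG
  rw [← AddSubgroup.toIntSubmodule_toAddSubgroup (Subring.closure Γ).toAddSubgroup]
  exact (Submodule.fg_iff_addSubgroup_fg _).mp hfg
end

section
/- Let H = (−1,−23/ℚ) be the quaternion algebra over ℚ with i² = −1, j² = −23, ij = −ji. Let 𝒪₁ = ℤ ⊕ ℤi ⊕ ℤ(1+j)/2 ⊕ ℤ(i+ij)/2 and 𝒪₂ = ℤ ⊕ 3ℤi ⊕ ℤ(1+j)/2 ⊕ ℤ(11i+ij)/6, both subrings of H. Then the unit groups are 𝒪₁^× = {1, −1, i, −i} and 𝒪₂^× = {1, −1}; consequently 𝒪₁ and 𝒪₂ are not isomorphic as rings. -/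
set_option maxHeartbeats 1000000
set_option synthInstance.maxHeartbeats 400000

open Quaternion

noncomputable def nrm13 (q : ℍ[ℚ, -1, -23]) : ℚ :=
  q.re^2 + q.imI^2 + 23*q.imJ^2 + 23*q.imK^2

lemma nrm13_mul (x y : ℍ[ℚ, -1, -23]) : nrm13 (x*y) = nrm13 x * nrm13 y := by
  simp only [nrm13, QuaternionAlgebra.re_mul, QuaternionAlgebra.imI_mul,
    QuaternionAlgebra.imJ_mul, QuaternionAlgebra.imK_mul]
  ring

lemma nrm13_one : nrm13 1 = 1 := by
  simp [nrm13]

lemma mem_span_four13 {g1 g2 g3 g4 x : ℍ[ℚ, -1, -23]}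
    (h : x ∈ (Submodule.span ℤ {g1, g2, g3, g4} : Submodule ℤ ℍ[ℚ, -1, -23])) :
    ∃ a b c d : ℤ, x = a • g1 + (b • g2 + (c • g3 + d • g4)) := by
  rw [show ({g1,g2,g3,g4} : Set ℍ[ℚ, -1, -23]) = insert g1 {g2,g3,g4} from rfl,
    Submodule.mem_span_insert] at h
  obtain ⟨a, z, hz, rfl⟩ := h
  rw [show ({g2,g3,g4} : Set ℍ[ℚ, -1, -23]) = insert g2 {g3,g4} from rfl,
    Submodule.mem_span_insert] at hz
  obtain ⟨b, w, hw, rfl⟩ := hz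
  rw [show ({g3,g4} : Set ℍ[ℚ, -1, -23]) = insert g3 {g4} from rfl,
    Submodule.mem_span_insert] at hw
  obtain ⟨c, v, hv, rfl⟩ := hw
  rw [Submodule.mem_span_singleton] at hv
  obtain ⟨d, rfl⟩ := hv
  exact ⟨a, b, c, d, rfl⟩

lemma sqlt13 {c : ℤ} (h : c^2 < 1) : c = 0 := by
  by_contra hc
  have h1 : 1 ≤ c ∨ c ≤ -1 := by omega
  rcases h1 with h1 | h1 <;> nlinarith

lemma quad13_1 (a b c d : ℤ) (h : a^2+a*c+6*c^2+(b^2+b*d+6*d^2) = 1) :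
    c = 0 ∧ d = 0 ∧ (a = 1 ∧ b = 0 ∨ a = -1 ∧ b = 0 ∨ a = 0 ∧ b = 1 ∨ a = 0 ∧ b = -1) := by
  have hc : c = 0 := sqlt13 (by nlinarith [sq_nonneg (2*a+c), sq_nonneg (2*b+d), sq_nonneg d])
  have hd : d = 0 := sqlt13 (by nlinarith [sq_nonneg (2*a+c), sq_nonneg (2*b+d), sq_nonneg c])
  subst hc hd
  have h' : a^2 + b^2 = 1 := by linarith
  have ha1 : a ≤ 1 := by nlinarith [sq_nonneg (a-1), sq_nonneg b]
  have ha2 : -1 ≤ a := by nlinarith [sq_nonneg (a+1), sq_nonneg b]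
  have hb1 : b ≤ 1 := by nlinarith [sq_nonneg (b-1), sq_nonneg a]
  have hb2 : -1 ≤ b := by nlinarith [sq_nonneg (b+1), sq_nonneg a]
  interval_cases a <;> interval_cases b <;> simp_all

lemma quad13_2 (a b c d : ℤ) (h : a^2+a*c+6*c^2+(9*b^2+11*b*d+4*d^2) = 1) :
    c = 0 ∧ b = 0 ∧ d = 0 ∧ (a = 1 ∨ a = -1) := by
  have h36 : 9*(2*a+c)^2 + 207*c^2 + (18*b+11*d)^2 + 23*d^2 = 36 := by ring_nf; nlinarith [h]
  have hc : c = 0 := sqlt13 (by nlinarith [sq_nonneg (2*a+c), sq_nonneg (18*b+11*d), sq_nonneg d])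
  have hd1 : d ≤ 1 := by nlinarith [sq_nonneg (d-1), sq_nonneg (2*a+c), sq_nonneg (18*b+11*d)]
  have hd2 : -1 ≤ d := by nlinarith [sq_nonneg (d+1), sq_nonneg (2*a+c), sq_nonneg (18*b+11*d)]
  have hb1 : b ≤ 1 := by nlinarith [sq_nonneg (18*b+11*d), sq_nonneg (2*a+c), sq_nonneg d]
  have hb2 : -1 ≤ b := by nlinarith [sq_nonneg (18*b+11*d), sq_nonneg (2*a+c), sq_nonneg d]
  have ha1 : a ≤ 1 := by nlinarith [sq_nonneg (18*b+11*d), sq_nonneg d, sq_nonneg (a-1)]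
  have ha2 : -1 ≤ a := by nlinarith [sq_nonneg (18*b+11*d), sq_nonneg d, sq_nonneg (a+1)]
  subst hc
  interval_cases a <;> interval_cases b <;> interval_cases d <;> omega

lemma nrm13_nonneg (q : ℍ[ℚ, -1, -23]) : 0 ≤ nrm13 q := by
  unfold nrm13; positivity

/-- in `H = (−1,−23/ℚ)`, the orders
`𝒪₁ = ℤ ⊕ ℤi ⊕ ℤ(1+j)/2 ⊕ ℤ(i+ij)/2` and `𝒪₂ = ℤ ⊕ 3ℤi ⊕ ℤ(1+j)/2 ⊕ ℤ(11i+ij)/6` have unit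
groups `𝒪₁^× = {1, −1, i, −i}` and `𝒪₂^× = {1, −1}`; consequently `𝒪₁` and `𝒪₂` are not
isomorphic as rings. -/
theorem stmt_13 (O₁ O₂ : Subring ℍ[ℚ, -1, -23])
    (hO₁ : (O₁ : Set ℍ[ℚ, -1, -23]) =
      (Submodule.span ℤ {(1 : ℍ[ℚ, -1, -23]), ⟨0, 1, 0, 0⟩,
        ⟨1/2, 0, 1/2, 0⟩, ⟨0, 1/2, 0, 1/2⟩} : Submodule ℤ ℍ[ℚ, -1, -23]))
    (hO₂ : (O₂ : Set ℍ[ℚ, -1, -23]) =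
      (Submodule.span ℤ {(1 : ℍ[ℚ, -1, -23]), ⟨0, 3, 0, 0⟩,
        ⟨1/2, 0, 1/2, 0⟩, ⟨0, 11/6, 0, 1/6⟩} : Submodule ℤ ℍ[ℚ, -1, -23])) :
    {x : ℍ[ℚ, -1, -23] | ∃ u : O₁ˣ, ((u : O₁) : ℍ[ℚ, -1, -23]) = x}
        = {1, -1, ⟨0, 1, 0, 0⟩, ⟨0, -1, 0, 0⟩} ∧
    {x : ℍ[ℚ, -1, -23] | ∃ u : O₂ˣ, ((u : O₂) : ℍ[ℚ, -1, -23]) = x} = {1, -1} ∧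
    ¬ Nonempty (O₁ ≃+* O₂) := by
  have hm1 : ∀ x : ℍ[ℚ, -1, -23], x ∈ O₁ ↔ x ∈ (Submodule.span ℤ
      {(1 : ℍ[ℚ, -1, -23]), ⟨0, 1, 0, 0⟩, ⟨1/2, 0, 1/2, 0⟩, ⟨0, 1/2, 0, 1/2⟩} :
      Submodule ℤ ℍ[ℚ, -1, -23]) := by
    intro x
    constructor
    · intro hx; rw [← SetLike.mem_coe, ← hO₁]; exact hx
    · intro hx; rw [← SetLike.mem_coe, hO₁]; exact hx
  have hm2 : ∀ x : ℍ[ℚ, -1, -23], x ∈ O₂ ↔ x ∈ (Submodule.span ℤ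
      {(1 : ℍ[ℚ, -1, -23]), ⟨0, 3, 0, 0⟩, ⟨1/2, 0, 1/2, 0⟩, ⟨0, 11/6, 0, 1/6⟩} :
      Submodule ℤ ℍ[ℚ, -1, -23]) := by
    intro x
    constructor
    · intro hx; rw [← SetLike.mem_coe, ← hO₂]; exact hx
    · intro hx; rw [← SetLike.mem_coe, hO₂]; exact hx
  -- basic memberships
  have h1O1 : (1 : ℍ[ℚ, -1, -23]) ∈ O₁ := by
    rw [hm1]; exact Submodule.subset_span (by simp)
  have hiO1 : (⟨0, 1, 0, 0⟩ : ℍ[ℚ, -1, -23]) ∈ O₁ := by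
    rw [hm1]; exact Submodule.subset_span (by simp)
  have h1O2 : (1 : ℍ[ℚ, -1, -23]) ∈ O₂ := by
    rw [hm2]; exact Submodule.subset_span (by simp)
  have hnegi : (⟨0, -1, 0, 0⟩ : ℍ[ℚ, -1, -23]) = -⟨0, 1, 0, 0⟩ := by
    apply QuaternionAlgebra.ext <;> simp
  have hii : (⟨0, 1, 0, 0⟩ : ℍ[ℚ, -1, -23]) * ⟨0, -1, 0, 0⟩ = 1 := by
    apply QuaternionAlgebra.ext <;>
      simp [QuaternionAlgebra.re_mul, QuaternionAlgebra.imI_mul,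
        QuaternionAlgebra.imJ_mul, QuaternionAlgebra.imK_mul]
  have hii' : (⟨0, -1, 0, 0⟩ : ℍ[ℚ, -1, -23]) * ⟨0, 1, 0, 0⟩ = 1 := by
    apply QuaternionAlgebra.ext <;>
      simp [QuaternionAlgebra.re_mul, QuaternionAlgebra.imI_mul,
        QuaternionAlgebra.imJ_mul, QuaternionAlgebra.imK_mul]
  have mk_unit : ∀ (O : Subring ℍ[ℚ, -1, -23]) (p q : ℍ[ℚ, -1, -23]), p ∈ O → q ∈ O →
      p * q = 1 → q * p = 1 → ∃ u : Oˣ, ((u : O) : ℍ[ℚ, -1, -23]) = p := by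
    intro O p q hp hq h1 h2
    exact ⟨⟨⟨p, hp⟩, ⟨q, hq⟩, Subtype.ext h1, Subtype.ext h2⟩, rfl⟩
  -- unit group of O₁
  have part1 : {x : ℍ[ℚ, -1, -23] | ∃ u : O₁ˣ, ((u : O₁) : ℍ[ℚ, -1, -23]) = x}
      = {1, -1, ⟨0, 1, 0, 0⟩, ⟨0, -1, 0, 0⟩} := by
    ext x
    constructor
    · rintro ⟨u, rfl⟩
      have hxy : ((u : O₁) : ℍ[ℚ, -1, -23]) * (((u⁻¹ : O₁ˣ) : O₁) : ℍ[ℚ, -1, -23]) = 1 := by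
        have h0 : (u : O₁) * ((u⁻¹ : O₁ˣ) : O₁) = 1 := u.mul_inv
        exact_mod_cast congrArg (fun z : O₁ => (z : ℍ[ℚ, -1, -23])) h0
      obtain ⟨a, b, c, d, hrep⟩ := mem_span_four13 ((hm1 _).mp (u : O₁).2)
      obtain ⟨a', b', c', d', hrep'⟩ := mem_span_four13 ((hm1 _).mp ((u⁻¹ : O₁ˣ) : O₁).2)
      have nx : nrm13 ((u : O₁) : ℍ[ℚ, -1, -23])
          = ((a^2+a*c+6*c^2+(b^2+b*d+6*d^2) : ℤ) : ℚ) := by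
        rw [hrep]; simp [nrm13, QuaternionAlgebra.re_smul, QuaternionAlgebra.imI_smul,
          QuaternionAlgebra.imJ_smul, QuaternionAlgebra.imK_smul, zsmul_eq_mul]
        push_cast; ring
      have ny : nrm13 (((u⁻¹ : O₁ˣ) : O₁) : ℍ[ℚ, -1, -23]) = ((a'^2+a'*c'+6*c'^2+(b'^2+b'*d'+6*d'^2) : ℤ) : ℚ) := by
        rw [hrep']; simp [nrm13, QuaternionAlgebra.re_smul, QuaternionAlgebra.imI_smul,
          QuaternionAlgebra.imJ_smul, QuaternionAlgebra.imK_smul, zsmul_eq_mul]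
        push_cast; ring
      have hn : (a^2+a*c+6*c^2+(b^2+b*d+6*d^2)) * (a'^2+a'*c'+6*c'^2+(b'^2+b'*d'+6*d'^2)) = 1 := by
        have := nrm13_mul ((u : O₁) : ℍ[ℚ, -1, -23]) (((u⁻¹ : O₁ˣ) : O₁) : ℍ[ℚ, -1, -23])
        rw [hxy, nrm13_one, nx, ny] at this
        exact_mod_cast this.symm
      have hn1 : a^2+a*c+6*c^2+(b^2+b*d+6*d^2) = 1 := by
        have hnn : (0:ℚ) ≤ ((a^2+a*c+6*c^2+(b^2+b*d+6*d^2) : ℤ) : ℚ) := by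
          rw [← nx]; exact nrm13_nonneg _
        have hnn' : (0:ℤ) ≤ a^2+a*c+6*c^2+(b^2+b*d+6*d^2) := by exact_mod_cast hnn
        rcases Int.isUnit_iff.mp (IsUnit.of_mul_eq_one _ hn) with h | h
        · exact h
        · omega
      obtain ⟨hc, hd, hcase⟩ := quad13_1 a b c d hn1
      subst hc hd
      have e1 : ((u : O₁) : ℍ[ℚ, -1, -23]) = ⟨(a:ℚ), (b:ℚ), 0, 0⟩ := by
        rw [hrep]; apply QuaternionAlgebra.ext <;>
          simp [QuaternionAlgebra.re_smul, QuaternionAlgebra.imI_smul,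
            QuaternionAlgebra.imJ_smul, QuaternionAlgebra.imK_smul]
      rcases hcase with ⟨ha, hb⟩ | ⟨ha, hb⟩ | ⟨ha, hb⟩ | ⟨ha, hb⟩ <;> subst ha <;> subst hb <;>
        rw [e1] <;>
        norm_num [Set.mem_insert_iff, Set.mem_singleton_iff, QuaternionAlgebra.ext_iff]
    · intro hx
      rcases hx with rfl | rfl | rfl | rfl
      · exact mk_unit O₁ 1 1 h1O1 h1O1 (one_mul 1) (one_mul 1)
      · exact mk_unit O₁ (-1) (-1) (O₁.neg_mem h1O1) (O₁.neg_mem h1O1) (by rw [neg_mul_neg, one_mul]) (by rw [neg_mul_neg, one_mul])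
      · exact mk_unit O₁ _ _ hiO1 (hnegi ▸ O₁.neg_mem hiO1) hii hii'
      · exact mk_unit O₁ _ _ (hnegi ▸ O₁.neg_mem hiO1) hiO1 hii' hii
  -- unit group of O₂
  have part2 : {x : ℍ[ℚ, -1, -23] | ∃ u : O₂ˣ, ((u : O₂) : ℍ[ℚ, -1, -23]) = x} = {1, -1} := by
    ext x
    constructor
    · rintro ⟨u, rfl⟩
      have hxy : ((u : O₂) : ℍ[ℚ, -1, -23]) * (((u⁻¹ : O₂ˣ) : O₂) : ℍ[ℚ, -1, -23]) = 1 := by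
        have h0 : (u : O₂) * ((u⁻¹ : O₂ˣ) : O₂) = 1 := u.mul_inv
        exact_mod_cast congrArg (fun z : O₂ => (z : ℍ[ℚ, -1, -23])) h0
      obtain ⟨a, b, c, d, hrep⟩ := mem_span_four13 ((hm2 _).mp (u : O₂).2)
      obtain ⟨a', b', c', d', hrep'⟩ := mem_span_four13 ((hm2 _).mp ((u⁻¹ : O₂ˣ) : O₂).2)
      have nx : nrm13 ((u : O₂) : ℍ[ℚ, -1, -23])
          = ((a^2+a*c+6*c^2+(9*b^2+11*b*d+4*d^2) : ℤ) : ℚ) := by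
        rw [hrep]; simp [nrm13, QuaternionAlgebra.re_smul, QuaternionAlgebra.imI_smul,
          QuaternionAlgebra.imJ_smul, QuaternionAlgebra.imK_smul, zsmul_eq_mul]
        push_cast; ring
      have ny : nrm13 (((u⁻¹ : O₂ˣ) : O₂) : ℍ[ℚ, -1, -23]) = ((a'^2+a'*c'+6*c'^2+(9*b'^2+11*b'*d'+4*d'^2) : ℤ) : ℚ) := by
        rw [hrep']; simp [nrm13, QuaternionAlgebra.re_smul, QuaternionAlgebra.imI_smul,
          QuaternionAlgebra.imJ_smul, QuaternionAlgebra.imK_smul, zsmul_eq_mul]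
        push_cast; ring
      have hn : (a^2+a*c+6*c^2+(9*b^2+11*b*d+4*d^2))
          * (a'^2+a'*c'+6*c'^2+(9*b'^2+11*b'*d'+4*d'^2)) = 1 := by
        have := nrm13_mul ((u : O₂) : ℍ[ℚ, -1, -23]) (((u⁻¹ : O₂ˣ) : O₂) : ℍ[ℚ, -1, -23])
        rw [hxy, nrm13_one, nx, ny] at this
        exact_mod_cast this.symm
      have hn1 : a^2+a*c+6*c^2+(9*b^2+11*b*d+4*d^2) = 1 := by
        have hnn : (0:ℚ) ≤ ((a^2+a*c+6*c^2+(9*b^2+11*b*d+4*d^2) : ℤ) : ℚ) := by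
          rw [← nx]; exact nrm13_nonneg _
        have hnn' : (0:ℤ) ≤ a^2+a*c+6*c^2+(9*b^2+11*b*d+4*d^2) := by exact_mod_cast hnn
        rcases Int.isUnit_iff.mp (IsUnit.of_mul_eq_one _ hn) with h | h
        · exact h
        · omega
      obtain ⟨hc, hb, hd, hcase⟩ := quad13_2 a b c d hn1
      subst hc hb hd
      have e1 : ((u : O₂) : ℍ[ℚ, -1, -23]) = ⟨(a:ℚ), 0, 0, 0⟩ := by
        rw [hrep]; apply QuaternionAlgebra.ext <;>
          simp [QuaternionAlgebra.re_smul, QuaternionAlgebra.imI_smul,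
            QuaternionAlgebra.imJ_smul, QuaternionAlgebra.imK_smul]
      rcases hcase with ha | ha <;> subst ha <;> rw [e1] <;>
        norm_num [Set.mem_insert_iff, Set.mem_singleton_iff, QuaternionAlgebra.ext_iff]
    · intro hx
      rcases hx with rfl | rfl
      · exact mk_unit O₂ 1 1 h1O2 h1O2 (one_mul 1) (one_mul 1)
      · exact mk_unit O₂ (-1) (-1) (O₂.neg_mem h1O2) (O₂.neg_mem h1O2) (by rw [neg_mul_neg, one_mul]) (by rw [neg_mul_neg, one_mul])
  refine ⟨part1, part2, ?_⟩
  rintro ⟨f⟩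
  set xi : O₁ := ⟨⟨0, 1, 0, 0⟩, hiO1⟩ with hxi
  set yi : O₁ := ⟨⟨0, -1, 0, 0⟩, hnegi ▸ O₁.neg_mem hiO1⟩ with hyi
  have hmul : xi * yi = 1 := Subtype.ext hii
  have hmul' : yi * xi = 1 := Subtype.ext hii'
  have hu : ∃ u : O₂ˣ, ((u : O₂) : ℍ[ℚ, -1, -23]) = ((f xi : O₂) : ℍ[ℚ, -1, -23]) := by
    refine ⟨⟨f xi, f yi, ?_, ?_⟩, rfl⟩
    · rw [← map_mul, hmul, map_one]
    · rw [← map_mul, hmul', map_one]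
  have hmem : ((f xi : O₂) : ℍ[ℚ, -1, -23]) ∈ ({1, -1} : Set ℍ[ℚ, -1, -23]) := by
    rw [← part2]; exact hu
  have hsq : xi * xi = (-1 : O₁) := by
    apply Subtype.ext
    show (⟨0, 1, 0, 0⟩ : ℍ[ℚ, -1, -23]) * ⟨0, 1, 0, 0⟩ = ((-1 : O₁) : ℍ[ℚ, -1, -23])
    have : ((-1 : O₁) : ℍ[ℚ, -1, -23]) = -1 := by norm_cast
    rw [this]
    apply QuaternionAlgebra.ext <;>
      simp [QuaternionAlgebra.re_mul, QuaternionAlgebra.imI_mul,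
        QuaternionAlgebra.imJ_mul, QuaternionAlgebra.imK_mul]
  have hfsq : ((f xi : O₂) : ℍ[ℚ, -1, -23]) * ((f xi : O₂) : ℍ[ℚ, -1, -23]) = -1 := by
    have : f xi * f xi = -1 := by rw [← map_mul, hsq, map_neg, map_one]
    calc ((f xi : O₂) : ℍ[ℚ, -1, -23]) * ((f xi : O₂) : ℍ[ℚ, -1, -23])
        = ((f xi * f xi : O₂) : ℍ[ℚ, -1, -23]) := by norm_cast
      _ = ((-1 : O₂) : ℍ[ℚ, -1, -23]) := by rw [this]
      _ = -1 := by norm_cast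
  rcases hmem with h | h <;> rw [h] at hfsq <;>
    · have := congrArg QuaternionAlgebra.re hfsq
      norm_num at this
end
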